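/- The poset R₀ of triples ⟨t, f⃗, g⟩, where ⟨t, f⃗⟩ ∈ Q_{κ,δ} and g = ⟨f_{ht(t)-1}, ξ_g⟩ for some ξ_g < δ, ordered by end-extension with coordinatewise tree-extension of g above ξ_g, is <κ-closed. -/

import Mathlib

universe u

/-- A node of the binary tree `2^{<κ}`: a binary sequence of some ordinal length. -/
def BNode : Type (u + 1) :=
  Σ β : Ordinal.{u}, ({x : Ordinal.{u} // x < β} → Bool)

/-- The height (level) of a node is its length. -/
def BNode.ht (s : BNode.{u}) : Ordinal.{u} := s.1

/-- The restriction of a node to a smaller length. -/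
def BNode.restrict (t : BNode.{u}) (β : Ordinal.{u}) (h : β ≤ t.1) : BNode.{u} :=
  ⟨β, fun x => t.2 ⟨x.1, lt_of_lt_of_le x.2 h⟩⟩

/-- Tree order on nodes: end extension. -/
def BNode.le (s t : BNode.{u}) : Prop :=
  s.1 ≤ t.1 ∧ ∀ x : {x : Ordinal.{u} // x < s.1}, ∀ hx : x.1 < t.1, s.2 x = t.2 ⟨x.1, hx⟩

/-- Strict tree order on nodes. -/
def BNode.slt (s t : BNode.{u}) : Prop := BNode.le s t ∧ s.1 < t.1

/-- Replace the initial segment of `t` of length `s₁.1` by `s₁` ("swapping stems"). -/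
noncomputable def BNode.swap (s₁ t : BNode.{u}) (h : s₁.1 ≤ t.1) : BNode.{u} :=
  ⟨t.1, fun x => if hx : x.1 < s₁.1 then s₁.2 ⟨x.1, hx⟩ else t.2 x⟩

/-- `C` is club in `κ`: unbounded in `κ` and closed under suprema below `κ`. -/
def IsClubIn (C : Set Ordinal.{u}) (κ : Ordinal.{u}) : Prop :=
  (∀ α < κ, ∃ β ∈ C, α < β ∧ β < κ) ∧
    ∀ α < κ, (0 : Ordinal.{u}) < α →
      (∀ β < α, ∃ γ ∈ C, β < γ ∧ γ < α) → α ∈ C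

/-- `S` is stationary in `κ`: it meets every club subset of `κ`. -/
def IsStationaryIn (S : Set Ordinal.{u}) (κ : Ordinal.{u}) : Prop :=
  ∀ C : Set Ordinal.{u}, IsClubIn C κ → ∃ x, x ∈ S ∧ x ∈ C ∧ x < κ

/-- `κ` is Mahlo: inaccessible, and the regular cardinals below `κ` are stationary. -/
def IsMahlo (κ : Cardinal.{u}) : Prop :=
  κ.IsInaccessible ∧
    IsStationaryIn {o : Ordinal.{u} | o.card.IsRegular ∧ o.card.ord = o} κ.ord

/-- `κ` is 2-Mahlo: Mahlo, and the Mahlo cardinals below `κ` are stationary. -/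
def Is2Mahlo (κ : Cardinal.{u}) : Prop :=
  IsMahlo κ ∧ IsStationaryIn {o : Ordinal.{u} | IsMahlo o.card ∧ o.card.ord = o} κ.ord

/-- A condition of Gitik's forcing `Q_{κ,δ}`: a normal homogeneous subtree of `2^{<κ}`
of successor height `top + 1 < κ`, together with a `δ`-ascent path `f` through it. -/
structure QCond (κ δ : Ordinal.{u}) : Type (u + 1) where
  /-- the top level of the tree; the tree has successor height `top + 1`. -/
  top : Ordinal.{u}
  top_lt : top + 1 < κ
  /-- the tree. -/
  T : Set BNode.{u}
  mem_ht : ∀ t ∈ T, BNode.ht t < top + 1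
  levels_nonempty : ∀ α < top + 1, ∃ t ∈ T, BNode.ht t = α
  downward_closed : ∀ t ∈ T, ∀ β : Ordinal.{u}, ∀ h : β ≤ BNode.ht t,
    BNode.restrict t β h ∈ T
  /-- normality: every node extends to every higher level below the height. -/
  normal : ∀ t ∈ T, ∀ α : Ordinal.{u}, BNode.ht t ≤ α → α < top + 1 →
    ∃ s ∈ T, BNode.ht s = α ∧ BNode.le t s
  /-- homogeneity: the cone above a node is invariant under swapping stems on a level. -/
  homog : ∀ s₀ ∈ T, ∀ s₁ ∈ T, BNode.ht s₀ = BNode.ht s₁ →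
    ∀ t ∈ T, BNode.le s₀ t → ∀ h : BNode.ht s₁ ≤ BNode.ht t, BNode.swap s₁ t h ∈ T
  /-- the `δ`-ascent path. -/
  f : Ordinal.{u} → Ordinal.{u} → BNode.{u}
  f_mem : ∀ α < top + 1, ∀ υ < δ, f α υ ∈ T ∧ BNode.ht (f α υ) = α
  f_ascent : ∀ α β : Ordinal.{u}, α < β → β < top + 1 →
    ∃ ξ < δ, ∀ υ : Ordinal.{u}, ξ ≤ υ → υ < δ → BNode.slt (f α υ) (f β υ)

/-- The order on `Q_{κ,δ}`: end extension of the tree and of the ascent path. -/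
def QLe {κ δ : Ordinal.{u}} (p q : QCond.{u} κ δ) : Prop :=
  q.top ≤ p.top ∧ q.T = {t ∈ p.T | BNode.ht t < q.top + 1} ∧
    ∀ α ≤ q.top, ∀ υ < δ, p.f α υ = q.f α υ

/-- A condition of the dense set `R₀` in `Q_{κ,δ} * Ḟ_{κ,δ}`: a condition `⟨t, f⃗⟩` of
`Q_{κ,δ}` together with `g = ⟨f_{ht(t)-1}, ξ⟩` for some `ξ < δ`, the `F`-part acting at
the top level of the tree. -/
structure RCond (κ δ : Ordinal.{u}) extends QCond.{u} κ δ : Type (u + 1) where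
  /-- the starting point of the `F_{κ,δ}`-condition. -/
  ξ : Ordinal.{u}
  ξ_lt : ξ < δ

/-- The order on `R₀`: extension in `Q_{κ,δ}`, equality of the `ξ`'s, and coordinatewise
tree-extension of the top functions above `ξ`. -/
def RLe {κ δ : Ordinal.{u}} (p q : RCond.{u} κ δ) : Prop :=
  QLe p.toQCond q.toQCond ∧ p.ξ = q.ξ ∧
    ∀ υ : Ordinal.{u}, p.ξ ≤ υ → υ < δ → BNode.le (q.f q.top υ) (p.f p.top υ)

/-! ### Auxiliary lemmas and constructions for the closure proof -/

theorem BNode.ext' {s t : BNode.{u}} (h1 : s.1 = t.1)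
    (h2 : ∀ x (hx : x < s.1) (hx' : x < t.1), s.2 ⟨x, hx⟩ = t.2 ⟨x, hx'⟩) : s = t := by
  obtain ⟨a, f⟩ := s; obtain ⟨b, g⟩ := t
  dsimp at h1; subst h1
  have : f = g := funext fun x => h2 x.1 x.2 x.2
  rw [this]

theorem BNode.le_refl (s : BNode.{u}) : BNode.le s s :=
  ⟨le_rfl, fun _ _ => rfl⟩

theorem BNode.le_trans {s t u : BNode.{u}} (h1 : BNode.le s t) (h2 : BNode.le t u) :
    BNode.le s u :=
  ⟨h1.1.trans h2.1, fun x hx => (h1.2 x (lt_of_lt_of_le x.2 h1.1)).trans (h2.2 _ hx)⟩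

theorem BNode.restrict_le (t : BNode.{u}) (β h) : BNode.le (BNode.restrict t β h) t :=
  ⟨h, fun _ _ => rfl⟩

theorem BNode.le_of_eq_ht {s t : BNode.{u}} (h : BNode.le s t) (he : s.1 = t.1) : s = t :=
  BNode.ext' he (fun x hx hx' => h.2 ⟨x, hx⟩ hx')

theorem BNode.le_swap (s₁ t : BNode.{u}) (h : s₁.1 ≤ t.1) : BNode.le s₁ (BNode.swap s₁ t h) :=
  ⟨h, fun x hx => by simp [BNode.swap, x.2]⟩

theorem BNode.swap_eq_self {s₁ t : BNode.{u}} (h : s₁.1 ≤ t.1) (he : s₁.1 = t.1) :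
    BNode.swap s₁ t h = s₁ :=
  (BNode.le_of_eq_ht (BNode.le_swap s₁ t h) he).symm

theorem BNode.restrict_swap_le {s₁ t : BNode.{u}} (h : s₁.1 ≤ t.1) {β : Ordinal.{u}}
    (hβ : β ≤ (BNode.swap s₁ t h).1) (hβ' : β ≤ s₁.1) :
    BNode.restrict (BNode.swap s₁ t h) β hβ = BNode.restrict s₁ β hβ' :=
  BNode.ext' rfl (fun x hx _ => by
    simp [BNode.swap, BNode.restrict, lt_of_lt_of_le hx hβ'])

theorem BNode.swap_restrict {s₁ t : BNode.{u}} (h : s₁.1 ≤ t.1) {β : Ordinal.{u}}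
    (hβ : β ≤ (BNode.swap s₁ t h).1) (hβt : β ≤ t.1) (hβ' : s₁.1 ≤ β) :
    BNode.restrict (BNode.swap s₁ t h) β hβ
      = BNode.swap s₁ (BNode.restrict t β hβt) hβ' :=
  BNode.ext' rfl (fun _ _ _ => rfl)

theorem olt_succ (o : Ordinal.{u}) : o < o + 1 := by
  rw [Ordinal.add_one_eq_succ]; exact Order.lt_succ o

theorem olt_succ_iff {a o : Ordinal.{u}} : a < o + 1 ↔ a ≤ o := by
  rw [Ordinal.add_one_eq_succ]; exact Order.lt_succ_iff

theorem RLe_refl {κ δ : Ordinal.{u}} (p : RCond.{u} κ δ) : RLe p p := by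
  refine ⟨⟨le_rfl, ?_, fun _ _ _ _ => rfl⟩, rfl, fun _ _ _ => BNode.le_refl _⟩
  ext t
  exact ⟨fun ht => ⟨ht, p.mem_ht t ht⟩, fun ht => ht.1⟩

theorem RLe_symm_of_top_eq {κ δ : Ordinal.{u}} {p q : RCond.{u} κ δ} (h : RLe p q)
    (htop : p.top = q.top) : RLe q p := by
  obtain ⟨⟨h1, h2, h3⟩, h4, h5⟩ := h
  have hT : q.T = p.T := by
    rw [h2]
    ext t
    exact ⟨fun ht => ht.1, fun ht => ⟨ht, by rw [← htop]; exact p.mem_ht t ht⟩⟩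
  refine ⟨⟨htop.le, ?_, fun α hα υ hυ => (h3 α (htop ▸ hα) υ hυ).symm⟩, h4.symm, ?_⟩
  · rw [hT]
    ext t
    exact ⟨fun ht => ⟨ht, p.mem_ht t ht⟩, fun ht => ht.1⟩
  · intro υ hυ1 hυ2
    have hfe : p.f q.top υ = q.f q.top υ := h3 q.top le_rfl υ hυ2
    rw [htop, hfe]
    exact BNode.le_refl _

section Construction

variable {κ δ : Ordinal.{u}} (γ : Ordinal.{u}) (F : Ordinal.{u} → RCond.{u} κ δ)

/-- The union of the trees along the chain. -/
def RTInf : Set BNode.{u} := {t | ∃ a < γ, t ∈ (F a).T}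

/-- The supremum of the heights of the trees along the chain. -/
noncomputable def RLam : Ordinal.{u} := Ordinal.bsup.{u, u} γ (fun a _ => (F a).top + 1)

variable (idx : Ordinal.{u} → Ordinal.{u})

/-- The cofinal branch through the union tree determined by the `υ`-th coordinate
of the ascent path. -/
noncomputable def RgB (υ : Ordinal.{u}) : BNode.{u} :=
  ⟨RLam γ F, fun x =>
    if h : x.1 < ((F (idx x.1)).f ((F (idx x.1)).top) υ).1
    then ((F (idx x.1)).f ((F (idx x.1)).top) υ).2 ⟨x.1, h⟩ else false⟩

/-- The new ascent path, sealing the branches at the top level. -/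
noncomputable def RfNew (α υ : Ordinal.{u}) : BNode.{u} :=
  if α < RLam γ F then (F (idx α)).f α υ else RgB γ F idx (max (F 0).ξ υ)

/-- The new top level of the sealed tree. -/
def RTop (δ : Ordinal.{u}) : Set BNode.{u} :=
  {t | t.1 = RLam γ F ∧
    (∀ β (hβ : β ≤ t.1), β < RLam γ F → BNode.restrict t β hβ ∈ RTInf γ F) ∧
    ∃ υ, (F 0).ξ ≤ υ ∧ υ < δ ∧ ∃ β₀, β₀ < RLam γ F ∧
      ∀ x (hx : x < RLam γ F) (hx' : x < t.1), β₀ ≤ x →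
        t.2 ⟨x, hx'⟩ = (RgB γ F idx υ).2 ⟨x, hx⟩}

end Construction
/-- The poset `R₀` is `<κ`-closed (`κ` 2-Mahlo, `δ < κ` regular): every descending
sequence of conditions of length `< κ` has a lower bound. -/
theorem R0_lt_kappa_closed (κ δ : Cardinal.{u})
    (h2M : Is2Mahlo κ) (hδ : δ.IsRegular) (hδκ : δ < κ) :
    ∀ γ < κ.ord, ∀ F : Ordinal.{u} → RCond.{u} κ.ord δ.ord,
      (∀ a b : Ordinal.{u}, a < b → b < γ → RLe (F b) (F a)) →
      ∃ r : RCond.{u} κ.ord δ.ord, ∀ a < γ, RLe r (F a) := by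
  intro γ hγ F hF
  have hκreg : κ.IsRegular := h2M.1.1.isRegular
  have hδ0 : (0 : Ordinal.{u}) < δ.ord := hδ.ord_pos
  by_cases hbd : ∃ b < γ, ∀ a < γ, (F a).top ≤ (F b).top
  · -- the heights are eventually constant; a late condition is a lower bound
    obtain ⟨b, hb, hmax⟩ := hbd
    refine ⟨F b, fun a ha => ?_⟩
    rcases lt_trichotomy a b with h | h | h
    · exact hF a b h hb
    · subst h; exact RLe_refl _
    · exact RLe_symm_of_top_eq (hF b a h ha)
        (le_antisymm (hmax a ha) ((hF b a h ha).1.1))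
  · by_cases hγ0 : γ = 0
    · -- empty sequence: produce the trivial condition
      subst hγ0
      have h1κ : (1 : Ordinal.{u}) < κ.ord := by
        rw [Cardinal.lt_ord, Ordinal.card_one]
        exact Cardinal.one_lt_aleph0.trans h2M.1.1.1
      refine ⟨⟨⟨0, by simpa using h1κ, {t | t.1 = 0}, ?_, ?_, ?_, ?_, ?_,
        fun _ _ => ⟨0, fun _ => false⟩, ?_, ?_⟩, 0, hδ0⟩,
        fun a ha => absurd ha (not_lt_zero (a := a))⟩
      · intro t ht
        show t.1 < 0 + 1
        rw [ht, zero_add]; exact zero_lt_one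
      · intro α hα
        rw [zero_add, Ordinal.lt_one_iff_zero] at hα
        exact ⟨⟨0, fun _ => false⟩, rfl, hα.symm⟩
      · intro t ht β hβ
        have : β = 0 := le_antisymm (ht ▸ hβ) (zero_le (a := β))
        exact this
      · intro t ht α hα1 hα2
        rw [zero_add, Ordinal.lt_one_iff_zero] at hα2
        subst hα2
        exact ⟨t, ht, ht, BNode.le_refl t⟩
      · intro s₀ _ s₁ _ _ t ht _ h
        exact ht
      · intro α hα υ hυ
        rw [zero_add, Ordinal.lt_one_iff_zero] at hα
        exact ⟨rfl, hα.symm⟩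
      · intro α β hαβ hβ
        rw [zero_add, Ordinal.lt_one_iff_zero] at hβ
        subst hβ
        exact absurd hαβ (not_lt_zero (a := α))
    · -- main case: the heights are unbounded in their supremum `Λ`
      have hγpos : (0 : Ordinal.{u}) < γ := pos_iff_ne_zero.2 hγ0
      have hunb : ∀ b < γ, ∃ a < γ, (F b).top < (F a).top := by
        intro b hb
        by_contra hcon
        push_neg at hcon
        exact hbd ⟨b, hb, fun a ha => hcon a ha⟩
      set Ξ := (F 0).ξ with hΞdef
      have hΞδ : Ξ < δ.ord := (F 0).ξ_lt
      have hmono : ∀ a b, a ≤ b → b < γ → RLe (F b) (F a) := by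
        intro a b hab hb
        rcases hab.lt_or_eq with h | h
        · exact hF a b h hb
        · subst h; exact RLe_refl _
      have htopmono : ∀ a b, a ≤ b → b < γ → (F a).top ≤ (F b).top :=
        fun a b hab hb => (hmono a b hab hb).1.1
      have hξ : ∀ a, a < γ → (F a).ξ = Ξ :=
        fun a ha => (hmono 0 a (zero_le (a := a)) ha).2.1
      have hTsub : ∀ a b, a ≤ b → b < γ → (F a).T ⊆ (F b).T := by
        intro a b hab hb t ht
        have := (hmono a b hab hb).1.2.1
        rw [this] at ht
        exact ht.1
      have hfagree : ∀ a b, a < γ → b < γ → ∀ α, α ≤ (F a).top → α ≤ (F b).top →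
          ∀ υ, υ < δ.ord → (F a).f α υ = (F b).f α υ := by
        intro a b ha hb α hαa hαb υ hυ
        rcases le_total a b with h | h
        · exact ((hmono a b h hb).1.2.2 α hαa υ hυ).symm
        · exact (hmono b a h ha).1.2.2 α hαb υ hυ
      -- facts about Λ
      have hΛκ : RLam γ F < κ.ord := by
        refine Cardinal.bsup_lt_ord_of_isRegular hκreg (Cardinal.lt_ord.1 hγ) ?_
        exact fun i _ => (F i).top_lt
      have hΛ1 : RLam γ F + 1 < κ.ord := by
        rw [Ordinal.add_one_eq_succ]
        exact (Cardinal.isSuccLimit_ord (h2M.1.1.1.le)).succ_lt hΛκ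
      have htoplt : ∀ a, a < γ → (F a).top < RLam γ F := fun a ha =>
        lt_of_lt_of_le (olt_succ _) (Ordinal.le_bsup _ a ha)
      have hidx0 : ∀ x : Ordinal.{u}, ∃ a, x < RLam γ F → (a < γ ∧ x < (F a).top) := by
        intro x
        by_cases hx : x < RLam γ F
        · obtain ⟨i, hi, hxi⟩ := (Ordinal.lt_bsup _).1 hx
          obtain ⟨a, ha, hia⟩ := hunb i hi
          exact ⟨a, fun _ => ⟨ha, (olt_succ_iff.1 hxi).trans_lt hia⟩⟩
        · exact ⟨0, fun h => absurd h hx⟩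
      choose idx hidx using hidx0
      -- the branch nodes
      have hB : ∀ a, a < γ → ∀ υ, υ < δ.ord →
          (F a).f (F a).top υ ∈ (F a).T ∧ ((F a).f (F a).top υ).1 = (F a).top :=
        fun a _ υ hυ => (F a).f_mem (F a).top (olt_succ _) υ hυ
      have hchainB : ∀ a b, a ≤ b → b < γ → ∀ υ, Ξ ≤ υ → υ < δ.ord →
          BNode.le ((F a).f (F a).top υ) ((F b).f (F b).top υ) := by
        intro a b hab hb υ hυ1 hυ2
        exact (hmono a b hab hb).2.2 υ (by rw [hξ b hb]; exact hυ1) hυ2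
      have hgval : ∀ υ, Ξ ≤ υ → υ < δ.ord → ∀ a, a < γ →
          ∀ x (hx : x < RLam γ F) (hxa : x < ((F a).f (F a).top υ).1),
          (RgB γ F idx υ).2 ⟨x, hx⟩ = ((F a).f (F a).top υ).2 ⟨x, hxa⟩ := by
        intro υ hυ1 hυ2 a ha x hx hxa
        obtain ⟨hixγ, hxix⟩ := hidx x hx
        have hxB : x < ((F (idx x)).f ((F (idx x)).top) υ).1 := by
          rw [(hB _ hixγ υ hυ2).2]; exact hxix
        show (if h : x < ((F (idx x)).f ((F (idx x)).top) υ).1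
          then ((F (idx x)).f ((F (idx x)).top) υ).2 ⟨x, h⟩ else false) = _
        rw [dif_pos hxB]
        rcases le_total (idx x) a with h | h
        · exact (hchainB (idx x) a h ha υ hυ1 hυ2).2 ⟨x, hxB⟩ hxa
        · exact ((hchainB a (idx x) h hixγ υ hυ1 hυ2).2 ⟨x, hxa⟩ hxB).symm
      have hBleg : ∀ υ, Ξ ≤ υ → υ < δ.ord → ∀ a, a < γ →
          BNode.le ((F a).f (F a).top υ) (RgB γ F idx υ) := by
        intro υ hυ1 hυ2 a ha
        refine ⟨?_, fun x hx => (hgval υ hυ1 hυ2 a ha x.1 hx x.2).symm⟩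
        show _ ≤ RLam γ F
        rw [(hB a ha υ hυ2).2]
        exact (htoplt a ha).le
      have hgmem : ∀ υ, Ξ ≤ υ → υ < δ.ord → ∀ β (hβ : β ≤ RLam γ F), β < RLam γ F →
          BNode.restrict (RgB γ F idx υ) β hβ ∈ RTInf γ F := by
        intro υ hυ1 hυ2 β hβ hβ'
        obtain ⟨haγ, hβa⟩ := hidx β hβ'
        have hBht := (hB (idx β) haγ υ hυ2).2
        have hβB : β ≤ ((F (idx β)).f ((F (idx β)).top) υ).1 := by
          rw [hBht]; exact hβa.le
        refine ⟨idx β, haγ, ?_⟩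
        have hdc := (F (idx β)).downward_closed _ (hB (idx β) haγ υ hυ2).1 β hβB
        have he : BNode.restrict (RgB γ F idx υ) β hβ
            = BNode.restrict ((F (idx β)).f ((F (idx β)).top) υ) β hβB := by
          apply BNode.ext'
          · rfl
          intro x hx hx'
          exact hgval υ hυ1 hυ2 (idx β) haγ x (lt_of_lt_of_le hx hβ)
            (lt_of_lt_of_le hx' (BNode.restrict_le _ _ _).1)
        rw [he]
        exact hdc
      have hgTop : ∀ υ, Ξ ≤ υ → υ < δ.ord → RgB γ F idx υ ∈ RTop γ F idx δ.ord := by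
        intro υ h1 h2
        refine ⟨rfl, hgmem υ h1 h2, υ, h1, h2, 0, ?_, fun x hx hx' _ => rfl⟩
        exact lt_of_lt_of_le ((zero_le (a := (F 0).top)).trans_lt (olt_succ (F 0).top))
          (Ordinal.le_bsup _ 0 hγpos)
      -- facts about the union tree
      have hTInf_ht : ∀ t ∈ RTInf γ F, t.1 < RLam γ F := by
        rintro t ⟨a, ha, hta⟩
        exact lt_of_lt_of_le ((F a).mem_ht t hta) (Ordinal.le_bsup _ a ha)
      have hhomogInf : ∀ s₁ ∈ RTInf γ F, ∀ u ∈ RTInf γ F, ∀ h : s₁.1 ≤ u.1,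
          BNode.swap s₁ u h ∈ RTInf γ F := by
        rintro s₁ ⟨a, ha, hs₁⟩ u ⟨b, hb, hu⟩ h
        have hc : max a b < γ := max_lt ha hb
        have hs₁c : s₁ ∈ (F (max a b)).T := hTsub a (max a b) (le_max_left a b) hc hs₁
        have huc : u ∈ (F (max a b)).T := hTsub b (max a b) (le_max_right a b) hc hu
        exact ⟨max a b, hc, (F (max a b)).homog _
          ((F (max a b)).downward_closed u huc s₁.1 h) s₁ hs₁c rfl u huc
          (BNode.restrict_le u _ h) h⟩
      -- build the lower bound
      refine ⟨⟨⟨RLam γ F, hΛ1, RTInf γ F ∪ RTop γ F idx δ.ord,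
        ?_, ?_, ?_, ?_, ?_, RfNew γ F idx, ?_, ?_⟩, Ξ, hΞδ⟩, ?_⟩
      · -- mem_ht
        rintro t (ht | ht)
        · exact (hTInf_ht t ht).trans (olt_succ _)
        · show t.1 < _
          rw [ht.1]
          exact olt_succ _
      · -- levels_nonempty
        intro α hα
        rcases lt_or_eq_of_le (olt_succ_iff.1 hα) with hαΛ | hαΛ
        · obtain ⟨haγ, hαa⟩ := hidx α hαΛ
          obtain ⟨t, htm, hth⟩ := (F (idx α)).levels_nonempty α (hαa.trans (olt_succ _))
          exact ⟨t, Or.inl ⟨idx α, haγ, htm⟩, hth⟩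
        · exact ⟨RgB γ F idx Ξ, Or.inr (hgTop Ξ le_rfl hΞδ), hαΛ.symm⟩
      · -- downward_closed
        rintro t (ht | ht) β hβ
        · obtain ⟨a, ha, hta⟩ := ht
          exact Or.inl ⟨a, ha, (F a).downward_closed t hta β hβ⟩
        · rcases lt_or_eq_of_le hβ with hβ' | hβ'
          · exact Or.inl (ht.2.1 β hβ (ht.1 ▸ hβ'))
          · subst hβ'
            exact Or.inr ht
      · -- normal
        rintro t (ht | ht) α hα1 hα2
        · rcases lt_or_eq_of_le (olt_succ_iff.1 hα2) with hαΛ | hαΛ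
          · obtain ⟨a, ha, hta⟩ := ht
            obtain ⟨haγ, hαa⟩ := hidx α hαΛ
            have hc : max a (idx α) < γ := max_lt ha haγ
            have htc : t ∈ (F (max a (idx α))).T :=
              hTsub a _ (le_max_left _ _) hc hta
            have hαc : α < (F (max a (idx α))).top + 1 :=
              olt_succ_iff.2 (hαa.le.trans (htopmono (idx α) _ (le_max_right _ _) hc))
            obtain ⟨s, hs, hsh, hsle⟩ := (F (max a (idx α))).normal t htc α hα1 hαc
            exact ⟨s, Or.inl ⟨_, hc, hs⟩, hsh, hsle⟩
          · -- extend to the top level by swapping into the branch `g Ξ`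
            have hth : t.1 < RLam γ F := hTInf_ht t ht
            refine ⟨BNode.swap t (RgB γ F idx Ξ) hth.le,
              Or.inr ⟨rfl, ?_, Ξ, le_rfl, hΞδ, t.1, hth, ?_⟩, hαΛ.symm,
              BNode.le_swap t _ hth.le⟩
            · intro β hβ hβΛ
              rcases le_total β t.1 with hle | hge
              · rw [BNode.restrict_swap_le hth.le hβ hle]
                obtain ⟨a, ha, hta⟩ := ht
                exact ⟨a, ha, (F a).downward_closed t hta β hle⟩
              · rw [BNode.swap_restrict hth.le hβ hβ hge]
                exact hhomogInf t ht _ (hgmem Ξ le_rfl hΞδ β hβ hβΛ) hge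
            · intro x hx hx' hge
              show (if h : x < t.1 then _ else _) = _
              rw [dif_neg (not_lt.2 hge)]
              rfl
        · refine ⟨t, Or.inr ht, ?_, BNode.le_refl t⟩
          have h1 : RLam γ F ≤ α := by rw [← ht.1]; exact hα1
          have h2 : α ≤ RLam γ F := olt_succ_iff.1 hα2
          show t.1 = α
          rw [ht.1]
          exact le_antisymm h1 h2
      · -- homog
        rintro s₀ hs₀ s₁ hs₁ hht t (htI | htT) hle01 h
        · rcases hs₁ with hs₁ | hs₁
          · exact Or.inl (hhomogInf s₁ hs₁ t htI h)
          · exact absurd (lt_of_le_of_lt h (hTInf_ht t htI))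
              (by show ¬s₁.1 < RLam γ F; rw [hs₁.1]; exact lt_irrefl _)
        · obtain ⟨h1, h2, υ, hυ1, hυ2, β₀, hβ₀, htail⟩ := htT
          rcases hs₁ with hs₁ | hs₁
          · -- s₁ is below the top level: the swap is again a sealed branch
            have hs₁Λ : s₁.1 < RLam γ F := hTInf_ht s₁ hs₁
            refine Or.inr ⟨h1, ?_, υ, hυ1, hυ2, max β₀ s₁.1, max_lt hβ₀ hs₁Λ, ?_⟩
            · intro β hβ hβΛ
              rcases le_total β s₁.1 with hle | hge
              · rw [BNode.restrict_swap_le h hβ hle]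
                obtain ⟨a, ha, hsa⟩ := hs₁
                exact ⟨a, ha, (F a).downward_closed s₁ hsa β hle⟩
              · rw [BNode.swap_restrict h hβ hβ hge]
                exact hhomogInf s₁ hs₁ _ (h2 β hβ hβΛ) hge
            · intro x hx hx' hge
              show (if hq : x < s₁.1 then _ else _) = _
              rw [dif_neg (not_lt.2 ((le_max_right β₀ s₁.1).trans hge))]
              exact htail x hx hx' ((le_max_left β₀ s₁.1).trans hge)
          · -- s₁ is itself at the top level: the swap is `s₁`
            rw [BNode.swap_eq_self h (hs₁.1.trans h1.symm)]
            exact Or.inr hs₁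
      · -- f_mem
        intro α hα υ hυ
        by_cases hαΛ : α < RLam γ F
        · have he : RfNew γ F idx α υ = (F (idx α)).f α υ := if_pos hαΛ
          obtain ⟨haγ, hαa⟩ := hidx α hαΛ
          obtain ⟨hm, hh⟩ := (F (idx α)).f_mem α (hαa.trans (olt_succ _)) υ hυ
          rw [he]
          exact ⟨Or.inl ⟨idx α, haγ, hm⟩, hh⟩
        · have hαe : α = RLam γ F :=
            le_antisymm (olt_succ_iff.1 hα) (not_lt.1 hαΛ)
          have he : RfNew γ F idx α υ = RgB γ F idx (max Ξ υ) := if_neg hαΛ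
          rw [he]
          exact ⟨Or.inr (hgTop _ (le_max_left _ _) (max_lt hΞδ hυ)), hαe ▸ rfl⟩
      · -- f_ascent
        intro α β hαβ hβ
        by_cases hβΛ : β < RLam γ F
        · obtain ⟨hcγ, hβc⟩ := hidx β hβΛ
          obtain ⟨ξ₁, hξ₁, hasc⟩ := (F (idx β)).f_ascent α β hαβ (hβc.trans (olt_succ _))
          refine ⟨ξ₁, hξ₁, fun υ hυ1 hυ2 => ?_⟩
          have hαΛ : α < RLam γ F := hαβ.trans hβΛ
          have e1 : RfNew γ F idx α υ = (F (idx β)).f α υ := by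
            rw [RfNew, if_pos hαΛ]
            exact hfagree (idx α) (idx β) (hidx α hαΛ).1 hcγ α
              (hidx α hαΛ).2.le (hαβ.le.trans hβc.le) υ hυ2
          have e2 : RfNew γ F idx β υ = (F (idx β)).f β υ := if_pos hβΛ
          rw [e1, e2]
          exact hasc υ hυ1 hυ2
        · have hβe : β = RLam γ F :=
            le_antisymm (olt_succ_iff.1 hβ) (not_lt.1 hβΛ)
          have hαΛ : α < RLam γ F := hβe ▸ hαβ
          obtain ⟨haγ, hαa⟩ := hidx α hαΛ
          obtain ⟨ξ₁, hξ₁, hasc⟩ :=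
            (F (idx α)).f_ascent α ((F (idx α)).top) hαa (olt_succ _)
          refine ⟨max Ξ ξ₁, max_lt hΞδ hξ₁, fun υ hυ1 hυ2 => ?_⟩
          have hυΞ : Ξ ≤ υ := (le_max_left _ _).trans hυ1
          have hυξ₁ : ξ₁ ≤ υ := (le_max_right _ _).trans hυ1
          have e1 : RfNew γ F idx α υ = (F (idx α)).f α υ := if_pos hαΛ
          have e2 : RfNew γ F idx β υ = RgB γ F idx υ := by
            rw [RfNew, if_neg hβΛ, max_eq_right hυΞ]
          constructor
          · rw [e1, e2]
            exact BNode.le_trans (hasc υ hυξ₁ hυ2).1 (hBleg υ hυΞ hυ2 (idx α) haγ)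
          · rw [e1, e2]
            show BNode.ht ((F (idx α)).f α υ) < RLam γ F
            rw [((F (idx α)).f_mem α (hαa.trans (olt_succ _)) υ hυ2).2]
            exact hαΛ
      · -- the lower bound extends every element of the chain
        intro a ha
        refine ⟨⟨(htoplt a ha).le, ?_, ?_⟩, (hξ a ha).symm, ?_⟩
        · ext t
          constructor
          · intro ht
            exact ⟨Or.inl ⟨a, ha, ht⟩, (F a).mem_ht t ht⟩
          · rintro ⟨htm | htm, hht⟩
            · obtain ⟨b, hb, htb⟩ := htm
              have hc : max a b < γ := max_lt ha hb
              have htc : t ∈ (F (max a b)).T := hTsub b _ (le_max_right a b) hc htb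
              have := (hmono a (max a b) (le_max_left a b) hc).1.2.1
              rw [this]
              exact ⟨htc, hht⟩
            · exact absurd ((htm.1.symm.trans_lt hht).trans_le
                (Ordinal.le_bsup _ a ha)) (lt_irrefl _)
        · intro α hα υ hυ
          have hαΛ : α < RLam γ F := lt_of_le_of_lt hα (htoplt a ha)
          show RfNew γ F idx α υ = (F a).f α υ
          rw [show RfNew γ F idx α υ = (F (idx α)).f α υ from if_pos hαΛ]
          exact hfagree (idx α) a (hidx α hαΛ).1 ha α (hidx α hαΛ).2.le hα υ hυ
        · intro υ hυ1 hυ2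
          show BNode.le _ (RfNew γ F idx (RLam γ F) υ)
          rw [show RfNew γ F idx (RLam γ F) υ = RgB γ F idx υ by
            rw [RfNew, if_neg (lt_irrefl _), max_eq_right (show (F 0).ξ ≤ υ from hυ1)]]
          exact hBleg υ hυ1 hυ2 a ha
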